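/- For nonnegative integers n, k with n + k even and k ≤ n, and every real ρ > 0, one has ∫_0^{2π} H_n(ρ cos θ) e^{-ikθ} dθ = 2π n! (-1)^{(n-k)/2} ρ^k L_{(n-k)/2}^{(k)}(ρ²) / ((n+k)/2)!; and if n + k is odd then the integral vanishes. -/

import Mathlib

open Complex intervalIntegral

/-- Physicists' Hermite polynomial. -/
noncomputable def Hpoly (n : ℕ) (x : ℂ) : ℂ :=
  (Nat.factorial n) * ∑ k ∈ Finset.range (n / 2 + 1),
    (-1 : ℂ) ^ k * (2 * x) ^ (n - 2 * k) / ((Nat.factorial k) * (Nat.factorial (n - 2 * k)))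

/-- Generalized Laguerre polynomial with integer parameter. -/
noncomputable def lagC (n : ℕ) (α : ℤ) (x : ℂ) : ℂ :=
  ∑ k ∈ Finset.range (n + 1),
    (-x) ^ k / (Nat.factorial k) *
      ((∏ i ∈ Finset.Icc (k + 1) n, ((α : ℂ) + (i : ℕ))) / (Nat.factorial (n - k)))

lemma integral_exp_int (m : ℤ) :
    (∫ θ : ℝ in (0)..(2*Real.pi), Complex.exp (I * m * θ)) =
      if m = 0 then (2*Real.pi : ℂ) else 0 := by
  split_ifs with h
  · subst h; simp
  · rw [integral_exp_mul_complex (by simp [h, Complex.ext_iff])]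
    have h1 : Complex.exp (I * m * (2*(Real.pi:ℂ))) = 1 := by
      rw [show I * (m:ℂ) * (2*(Real.pi:ℂ)) = (m:ℂ) * (2*(Real.pi:ℂ)*I) by ring]
      exact Complex.exp_int_mul_two_pi_mul_I m
    push_cast
    simp [h1]

lemma term_eq (m k j : ℕ) (hj : j ≤ m) (θ : ℝ) :
    Complex.exp (θ*I)^j * Complex.exp (-θ*I)^(m-j) * Complex.exp (-I*k*θ)
      = Complex.exp (I * (((2*j : ℤ) - m - k : ℤ) : ℂ) * θ) := by
  rw [← Complex.exp_nat_mul, ← Complex.exp_nat_mul, ← Complex.exp_add, ← Complex.exp_add]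
  congr 1
  push_cast [Nat.cast_sub hj]
  ring

lemma integrand_eq (n k : ℕ) (ρ : ℝ) (θ : ℝ) :
    Hpoly n ((ρ : ℂ) * Real.cos θ) * Complex.exp (-Complex.I * k * θ)
    = ∑ r ∈ Finset.range (n/2+1), ∑ j ∈ Finset.range (n - 2*r + 1),
       ((n.factorial:ℂ) * (-1)^r / (r.factorial * (n-2*r).factorial) * (ρ:ℂ)^(n-2*r) *
         ((n-2*r).choose j)) *
       Complex.exp (Complex.I * (((2*j : ℤ) - (n-2*r : ℕ) - k : ℤ) : ℂ) * θ) := by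
  unfold Hpoly
  rw [Finset.mul_sum, Finset.sum_mul]
  refine Finset.sum_congr rfl fun r hr => ?_
  have h2 : (2 : ℂ) * ((ρ:ℂ) * Real.cos θ) = (ρ:ℂ) * (Complex.exp (θ*I) + Complex.exp (-θ*I)) := by
    rw [Complex.ofReal_cos, ← Complex.two_cos]; ring
  rw [h2, mul_pow, add_pow]
  simp only [Finset.mul_sum, Finset.sum_mul, Finset.sum_div]
  refine Finset.sum_congr rfl fun j hj => ?_
  have hjm : j ≤ n - 2*r := by simp only [Finset.mem_range] at hj; omega
  rw [← term_eq (n-2*r) k j hjm θ]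
  simp only [div_eq_mul_inv]
  ring

lemma integral_eq (n k : ℕ) (ρ : ℝ) :
    (∫ θ : ℝ in (0)..(2 * Real.pi),
        Hpoly n ((ρ : ℂ) * Real.cos θ) * Complex.exp (-Complex.I * k * θ))
    = ∑ r ∈ Finset.range (n/2+1), ∑ j ∈ Finset.range (n - 2*r + 1),
       ((n.factorial:ℂ) * (-1)^r / (r.factorial * (n-2*r).factorial) * (ρ:ℂ)^(n-2*r) *
         ((n-2*r).choose j)) *
       (if ((2*j : ℤ) - (n-2*r : ℕ) - k = 0) then (2*Real.pi:ℂ) else 0) := by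
  simp only [integrand_eq n k ρ]
  rw [intervalIntegral.integral_finset_sum]
  · refine Finset.sum_congr rfl fun r _ => ?_
    rw [intervalIntegral.integral_finset_sum]
    · exact Finset.sum_congr rfl fun j _ => by
        rw [intervalIntegral.integral_const_mul, integral_exp_int]
    · intro j _
      apply Continuous.intervalIntegrable
      fun_prop
  · intro r _
    apply Continuous.intervalIntegrable
    apply continuous_finset_sum
    intro j _
    fun_prop

lemma prod_fact (k j : ℕ) : ∀ N : ℕ, j ≤ N →
    ((k+j).factorial : ℂ) * ∏ i ∈ Finset.Icc (j+1) N, ((k:ℂ)+(i:ℕ)) = ((k+N).factorial : ℂ) := by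
  intro N
  induction N with
  | zero => intro h; interval_cases j; simp
  | succ N ih =>
    intro h
    rcases Nat.lt_or_ge j (N+1) with h' | h'
    · have hj : j ≤ N := by omega
      rw [Finset.prod_Icc_succ_top (by omega), ← mul_assoc, ih (by omega)]
      rw [show k + (N+1) = (k+N) + 1 by ring, Nat.factorial_succ]
      push_cast
      ring
    · have : j = N + 1 := by omega
      subst this
      simp

theorem hermite_fourier_integral (n k : ℕ) (ρ : ℝ) (hρ : 0 < ρ) :
    (Even (n + k) → k ≤ n →
      (∫ θ : ℝ in (0)..(2 * Real.pi),
          Hpoly n ((ρ : ℂ) * Real.cos θ) * Complex.exp (-Complex.I * k * θ)) =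
        2 * Real.pi * (Nat.factorial n) * (-1 : ℂ) ^ ((n - k) / 2) * (ρ : ℂ) ^ k *
          lagC ((n - k) / 2) (k : ℤ) ((ρ : ℂ) ^ 2) / (Nat.factorial ((n + k) / 2))) ∧
    (¬ Even (n + k) →
      (∫ θ : ℝ in (0)..(2 * Real.pi),
          Hpoly n ((ρ : ℂ) * Real.cos θ) * Complex.exp (-Complex.I * k * θ)) = 0) := by
  constructor
  · intro hev hkn
    obtain ⟨M, hM⟩ := hev
    set N := (n - k) / 2 with hNdef
    have hn : n = k + 2 * N := by omega
    rw [integral_eq]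
    rw [← Finset.sum_subset (Finset.range_subset_range.mpr (by omega : N + 1 ≤ n / 2 + 1)) ?_]
    swap
    · intro r hr hrN
      simp only [Finset.mem_range] at hr hrN
      apply Finset.sum_eq_zero
      intro j hj
      simp only [Finset.mem_range] at hj
      rw [if_neg (by push_cast; omega), mul_zero]
    have hinner : ∀ r ∈ Finset.range (N+1),
        (∑ j ∈ Finset.range (n - 2*r + 1),
          ((n.factorial:ℂ) * (-1)^r / (r.factorial * (n-2*r).factorial) * (ρ:ℂ)^(n-2*r) *
            ((n-2*r).choose j)) *
          (if ((2*j : ℤ) - (n-2*r : ℕ) - k = 0) then (2*Real.pi:ℂ) else 0))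
        = ((n.factorial:ℂ) * (-1)^r / (r.factorial * (n-2*r).factorial) * (ρ:ℂ)^(n-2*r) *
          ((n-2*r).choose (k + (N - r)))) * (2*Real.pi:ℂ) := by
      intro r hr
      simp only [Finset.mem_range] at hr
      rw [Finset.sum_eq_single_of_mem (k + (N - r))
        (by simp only [Finset.mem_range]; omega)
        (fun j hj hne => by
          simp only [Finset.mem_range] at hj
          rw [if_neg (by push_cast; omega), mul_zero])]
      rw [if_pos (by push_cast; omega)]
    rw [Finset.sum_congr rfl hinner, ← Finset.sum_range_reflect]
    unfold lagC
    rw [show (2:ℂ) * Real.pi * (Nat.factorial n) * (-1:ℂ)^N * (ρ:ℂ)^k *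
        (∑ j ∈ Finset.range (N + 1), (-( (ρ:ℂ)^2)) ^ j / (Nat.factorial j) *
          ((∏ i ∈ Finset.Icc (j + 1) N, (((k:ℤ) : ℂ) + (i : ℕ))) / (Nat.factorial (N - j)))) /
        (Nat.factorial ((n + k) / 2))
      = ∑ j ∈ Finset.range (N + 1),
        (2:ℂ) * Real.pi * (Nat.factorial n) * (-1:ℂ)^N * (ρ:ℂ)^k *
          ((-( (ρ:ℂ)^2)) ^ j / (Nat.factorial j) *
          ((∏ i ∈ Finset.Icc (j + 1) N, (((k:ℤ) : ℂ) + (i : ℕ))) / (Nat.factorial (N - j)))) /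
        (Nat.factorial ((n + k) / 2))
      by rw [Finset.mul_sum, Finset.sum_div]]
    refine Finset.sum_congr rfl fun j hj => ?_
    simp only [Finset.mem_range] at hj
    have hjN : j ≤ N := by omega
    have e0 : N + 1 - 1 - j = N - j := by omega
    rw [e0]
    have e1 : n - 2*(N-j) = k + 2*j := by omega
    have e2 : k + (N - (N - j)) = k + j := by omega
    rw [e1, e2]
    have e3 : (n + k)/2 = k + N := by omega
    rw [e3]
    -- choose value
    have hC : ((k+2*j).choose (k+j) : ℂ) * (k+j).factorial * j.factorial
        = ((k+2*j).factorial : ℂ) := by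
      have := Nat.choose_mul_factorial_mul_factorial (show k + j ≤ k + 2*j by omega)
      rw [show k + 2*j - (k+j) = j by omega] at this
      exact_mod_cast congrArg (Nat.cast (R := ℂ)) this
    have hP : ((k+j).factorial : ℂ) *
        (∏ i ∈ Finset.Icc (j + 1) N, (((k:ℤ) : ℂ) + (i : ℕ))) = ((k+N).factorial : ℂ) := by
      have := prod_fact k j N hjN
      simpa using this
    have hsign : ((-1:ℂ))^(N-j) = (-1:ℂ)^N * (-1:ℂ)^j := by
      have h1 : ((-1:ℂ))^(N-j) * (-1:ℂ)^j = (-1:ℂ)^N := by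
        rw [← pow_add, Nat.sub_add_cancel hjN]
      have h2 : ((-1:ℂ))^j * (-1:ℂ)^j = 1 := by
        rw [← pow_add, ← two_mul, pow_mul]; norm_num
      calc ((-1:ℂ))^(N-j) = ((-1:ℂ))^(N-j) * ((-1:ℂ)^j * (-1:ℂ)^j) := by rw [h2, mul_one]
        _ = (-1:ℂ)^N * (-1:ℂ)^j := by rw [← mul_assoc, h1]
    set P := ∏ i ∈ Finset.Icc (j + 1) N, (((k:ℤ) : ℂ) + (i : ℕ)) with hPdef
    have hf : ∀ m : ℕ, ((m.factorial : ℂ)) ≠ 0 := fun m =>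
      Nat.cast_ne_zero.mpr (Nat.factorial_ne_zero m)
    have hPval : P = ((k+N).factorial : ℂ) / ((k+j).factorial : ℂ) := by
      rw [eq_div_iff (hf _), mul_comm]; exact hP
    rw [hPval, hsign]
    have hCval : (((k+2*j).choose (k+j)) : ℂ)
        = ((k+2*j).factorial : ℂ) / (((k+j).factorial : ℂ) * (j.factorial : ℂ)) := by
      rw [eq_div_iff (mul_ne_zero (hf _) (hf _))]
      linear_combination hC
    rw [hCval]
    have hρk : (ρ:ℂ)^(k+2*j) = (ρ:ℂ)^k * ((ρ:ℂ)^2)^j := by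
      rw [← pow_mul, ← pow_add]
    rw [hρk, neg_pow ((ρ:ℂ)^2)]
    field_simp
    ring_nf
    have hA : ((k+j*2).factorial : ℂ) * (((k+j*2).factorial : ℂ))⁻¹ = 1 := mul_inv_cancel₀ (hf _)
    have hB : ((k+N).factorial : ℂ) * (((k+N).factorial : ℂ))⁻¹ = 1 := mul_inv_cancel₀ (hf _)
    linear_combination ((n.factorial : ℂ) * (ρ:ℂ)^(j*2) * (ρ:ℂ)^k *
      (((N-j).factorial : ℂ))⁻¹ * (((k+j).factorial : ℂ))⁻¹ * ((j.factorial : ℂ))⁻¹) * (hA - hB)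
  · intro hodd
    rw [integral_eq]
    apply Finset.sum_eq_zero
    intro r hr
    apply Finset.sum_eq_zero
    intro j hj
    simp only [Finset.mem_range] at hr hj
    rw [if_neg ?_, mul_zero]
    intro hc
    exact hodd ⟨j + r, by push_cast at hc; omega⟩
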